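/- Let β ∈ (1,2], define f_β(α) = H(α) + (β/2)·(2α−1)² for α ∈ (0,1), and let q⁺_β ∈ (1/2,1) be the unique zero in (1/2,1) of f_β'(α) = ln((1−α)/α) + 2β(2α−1). Then there exist constants C > 0 and δ₀ ∈ (0,1/2), depending only on β, such that for every δ ∈ (0, δ₀] and all α, α' ∈ [1/2, 1) with |α' − q⁺_β| ≥ δ and |α − q⁺_β| ≤ δ/2, one has f_β(α') − f_β(α) ≤ −C·δ². -/

import Mathlib

/-- The binary entropy function `H(α) = -α ln α - (1-α) ln(1-α)`. -/
noncomputable def binEnt (α : ℝ) : ℝ := -α * Real.log α - (1 - α) * Real.log (1 - α)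

/-- The function `f_β(α) = H(α) + (β/2)(2α-1)²`. -/
noncomputable def fbeta (β α : ℝ) : ℝ := binEnt α + β / 2 * (2 * α - 1) ^ 2

set_option maxHeartbeats 1000000

noncomputable def fb1 (β α : ℝ) : ℝ := Real.log (1 - α) - Real.log α + 2 * β * (2 * α - 1)
noncomputable def fb2 (β α : ℝ) : ℝ := 4 * β - 1 / α - 1 / (1 - α)

lemma hasDerivAt_fbeta (β : ℝ) {α : ℝ} (h0 : 0 < α) (h1 : α < 1) :
    HasDerivAt (fbeta β) (fb1 β α) α := by
  have h1' : (0:ℝ) < 1 - α := by linarith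
  have d1 : HasDerivAt (fun x : ℝ => -x * Real.log x) (-Real.log α - 1) α := by
    have := ((hasDerivAt_id' α).neg.mul (Real.hasDerivAt_log h0.ne'))
    refine this.congr_deriv ?_
    simp only [Pi.neg_apply]
    field_simp
    ring
  have d2 : HasDerivAt (fun x : ℝ => (1 - x) * Real.log (1 - x)) (-Real.log (1 - α) - 1)
      α := by
    have dlin : HasDerivAt (fun x : ℝ => 1 - x) (-1) α := by
      simpa using (hasDerivAt_id' α).const_sub (1:ℝ)
    have dlog : HasDerivAt (fun x : ℝ => Real.log (1 - x)) (-(1/(1-α))) α := by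
      have := (Real.hasDerivAt_log h1'.ne').comp α dlin
      refine this.congr_deriv ?_
      field_simp
    have := dlin.mul dlog
    refine this.congr_deriv ?_
    field_simp
    ring
  have d3 : HasDerivAt (fun x : ℝ => β / 2 * (2 * x - 1) ^ 2) (2 * β * (2 * α - 1)) α := by
    have dlin : HasDerivAt (fun x : ℝ => 2 * x - 1) (2 : ℝ) α := by
      simpa using ((hasDerivAt_id' α).const_mul (2:ℝ)).sub_const (1:ℝ)
    have := ((dlin.pow 2).const_mul (β / 2))
    refine this.congr_deriv ?_
    ring
  have : HasDerivAt (fbeta β)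
      ((-Real.log α - 1) - (-Real.log (1-α) - 1) + 2 * β * (2 * α - 1)) α :=
    (d1.sub d2).add d3
  convert this using 1
  unfold fb1; ring

lemma hasDerivAt_fb1 (β : ℝ) {α : ℝ} (h0 : 0 < α) (h1 : α < 1) :
    HasDerivAt (fb1 β) (fb2 β α) α := by
  have h1' : (0:ℝ) < 1 - α := by linarith
  have dlin : HasDerivAt (fun x : ℝ => 1 - x) (-1) α := by
    simpa using (hasDerivAt_id' α).const_sub (1:ℝ)
  have dlog1 : HasDerivAt (fun x : ℝ => Real.log (1 - x)) (-(1/(1-α))) α := by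
    have := (Real.hasDerivAt_log h1'.ne').comp α dlin
    refine this.congr_deriv ?_
    field_simp
  have dlog2 : HasDerivAt (fun x : ℝ => Real.log x) (1/α) α := by
    simpa [one_div] using Real.hasDerivAt_log h0.ne'
  have dlin2 : HasDerivAt (fun x : ℝ => 2 * β * (2 * x - 1)) (4 * β) α := by
    have dl : HasDerivAt (fun x : ℝ => 2 * x - 1) (2 : ℝ) α := by
      simpa using ((hasDerivAt_id' α).const_mul (2:ℝ)).sub_const (1:ℝ)
    have := dl.const_mul (2 * β)
    refine this.congr_deriv ?_
    ring
  have := (dlog1.sub dlog2).add dlin2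
  refine this.congr_deriv ?_
  unfold fb2; ring

lemma hasDerivAt_fb2 (β : ℝ) {α : ℝ} (h0 : 0 < α) (h1 : α < 1) :
    HasDerivAt (fb2 β) (1 / α ^ 2 - 1 / (1 - α) ^ 2) α := by
  have h1' : (0:ℝ) < 1 - α := by linarith
  have dlin : HasDerivAt (fun x : ℝ => 1 - x) (-1) α := by
    simpa using (hasDerivAt_id' α).const_sub (1:ℝ)
  have dinv1 : HasDerivAt (fun x : ℝ => 1 / x) (-(1/α^2)) α := by
    simpa [one_div, neg_div] using (hasDerivAt_inv h0.ne')
  have dinv2 : HasDerivAt (fun x : ℝ => 1 / (1 - x)) (1/(1-α)^2) α := by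
    exact ((hasDerivAt_const α (1:ℝ)).div dlin h1'.ne').congr_deriv (by ring)
  have := ((hasDerivAt_const α (4*β)).sub dinv1).sub dinv2
  refine this.congr_deriv ?_
  ring

lemma fb2_strictAnti (β : ℝ) : StrictAntiOn (fb2 β) (Set.Ico (1/2 : ℝ) 1) := by
  apply strictAntiOn_of_deriv_neg (convex_Ico _ _)
  · intro x hx
    exact (hasDerivAt_fb2 β (by linarith [hx.1]) hx.2).continuousAt.continuousWithinAt
  · rw [interior_Ico]
    intro x hx
    rw [(hasDerivAt_fb2 β (by linarith [hx.1]) hx.2).deriv]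
    have h1 : (0:ℝ) < 1 - x := by linarith [hx.2]
    have h2 : (1 - x)^2 < x^2 := by nlinarith [hx.1, hx.2]
    have := one_div_lt_one_div_of_lt (by positivity) h2
    linarith

/-- For `β ∈ (1,2]` and `q⁺ ∈ (1/2,1)` the zero of
`f_β'(α) = ln((1-α)/α) + 2β(2α-1)` in `(1/2,1)`, there exist `C > 0` and
`δ₀ ∈ (0,1/2)` depending only on `β` such that for all `δ ∈ (0,δ₀]` and
`α, α' ∈ [1/2,1)` with `|α' - q⁺| ≥ δ` and `|α - q⁺| ≤ δ/2`,
`f_β(α') - f_β(α) ≤ -C·δ²`. -/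
theorem stmt6 (β : ℝ) (hβ : β ∈ Set.Ioc (1 : ℝ) 2)
    (qp : ℝ) (hqp : qp ∈ Set.Ioo (1 / 2 : ℝ) 1)
    (hqp_eq : Real.log ((1 - qp) / qp) + 2 * β * (2 * qp - 1) = 0) :
    ∃ C : ℝ, 0 < C ∧ ∃ δ₀ ∈ Set.Ioo (0 : ℝ) (1 / 2),
      ∀ δ : ℝ, 0 < δ → δ ≤ δ₀ →
        ∀ α ∈ Set.Ico (1 / 2 : ℝ) 1, ∀ α' ∈ Set.Ico (1 / 2 : ℝ) 1,
          δ ≤ |α' - qp| → |α - qp| ≤ δ / 2 →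
          fbeta β α' - fbeta β α ≤ -C * δ ^ 2 := by
  obtain ⟨hβ1, hβ2⟩ := hβ
  obtain ⟨hq1, hq2⟩ := hqp
  have hq0 : (0:ℝ) < qp := by linarith
  have hq1' : (0:ℝ) < 1 - qp := by linarith
  have hf1q : fb1 β qp = 0 := by
    unfold fb1
    rw [← Real.log_div hq1'.ne' hq0.ne']
    exact hqp_eq
  have hf1half : fb1 β (1/2 : ℝ) = 0 := by unfold fb1; norm_num
  -- MVT for fb1
  have mvt : ∀ a b : ℝ, a < b → 0 < a → b < 1 → ∃ c ∈ Set.Ioo a b,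
      fb2 β c = (fb1 β b - fb1 β a) / (b - a) := by
    intro a b hab ha hb
    apply exists_hasDerivAt_eq_slope (fb1 β) (fb2 β) hab
    · intro x hx
      exact (hasDerivAt_fb1 β (lt_of_lt_of_le ha hx.1)
        (lt_of_le_of_lt hx.2 hb)).continuousAt.continuousWithinAt
    · intro x hx
      exact hasDerivAt_fb1 β (lt_trans ha hx.1) (lt_trans hx.2 hb)
  -- MVT for fbeta
  have mvtf : ∀ a b : ℝ, a < b → 0 < a → b < 1 → ∃ c ∈ Set.Ioo a b,
      fb1 β c = (fbeta β b - fbeta β a) / (b - a) := by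
    intro a b hab ha hb
    apply exists_hasDerivAt_eq_slope (fbeta β) (fb1 β) hab
    · intro x hx
      exact (hasDerivAt_fbeta β (lt_of_lt_of_le ha hx.1)
        (lt_of_le_of_lt hx.2 hb)).continuousAt.continuousWithinAt
    · intro x hx
      exact hasDerivAt_fbeta β (lt_trans ha hx.1) (lt_trans hx.2 hb)
  have hA := fb2_strictAnti β
  -- critical point of fb2 in (1/2, qp)
  obtain ⟨c, hc, hc0⟩ := mvt (1/2) qp hq1 (by norm_num) hq2
  rw [hf1q, hf1half, sub_zero, zero_div] at hc0
  have hfb2q : fb2 β qp < 0 := by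
    have := hA ⟨hc.1.le, by linarith [hc.2]⟩ ⟨hq1.le, hq2⟩ hc.2
    linarith
  set μ := -fb2 β qp with hμdef
  have hμpos : 0 < μ := by simp only [hμdef]; linarith
  have hfq2v : fb2 β qp = -μ := by simp [hμdef]
  -- sign of fb1
  have hf1pos : ∀ x ∈ Set.Ioo (1/2 : ℝ) qp, 0 < fb1 β x := by
    intro x hx
    by_contra hle
    push_neg at hle
    obtain ⟨c₁, hc₁, he₁⟩ := mvt (1/2) x hx.1 (by norm_num) (by linarith [hx.2])
    obtain ⟨c₂, hc₂, he₂⟩ := mvt x qp hx.2 (by linarith [hx.1]) hq2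
    rw [hf1half, sub_zero, eq_div_iff (ne_of_gt (by linarith [hx.1] : (0:ℝ) < x - 1/2))] at he₁
    rw [hf1q, zero_sub, eq_div_iff (ne_of_gt (by linarith [hx.2] : (0:ℝ) < qp - x))] at he₂
    have hc12 : c₁ < c₂ := by linarith [hc₁.2, hc₂.1]
    have hAA := hA ⟨hc₁.1.le, by linarith [hc₁.2, hx.2]⟩
      ⟨by linarith [hc₂.1, hx.1], by linarith [hc₂.2]⟩ hc12
    have h1 : fb2 β c₁ ≤ 0 := by nlinarith [hc₁.1, hc₁.2]
    have h2 : 0 ≤ fb2 β c₂ := by nlinarith [hc₂.1, hc₂.2]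
    linarith
  have hf1neg : ∀ x ∈ Set.Ioo qp (1 : ℝ), fb1 β x < 0 := by
    intro x hx
    obtain ⟨c', hc', he⟩ := mvt qp x hx.1 hq0 hx.2
    rw [hf1q, sub_zero, eq_div_iff (ne_of_gt (by linarith [hx.1] : (0:ℝ) < x - qp))] at he
    have hlt : fb2 β c' < 0 := by
      have hcc' : c < c' := by linarith [hc.2, hc'.1]
      have := hA ⟨hc.1.le, by linarith [hc.2]⟩
        ⟨by linarith [hc'.1], by linarith [hc'.2, hx.2]⟩ hcc'
      linarith
    nlinarith [hc'.1, hc'.2]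
  -- monotonicity of fbeta
  have hmono : MonotoneOn (fbeta β) (Set.Icc (1/2 : ℝ) qp) := by
    apply monotoneOn_of_deriv_nonneg (convex_Icc _ _)
    · intro x hx
      exact (hasDerivAt_fbeta β (by linarith [hx.1]) (by linarith [hx.2])).continuousAt.continuousWithinAt
    · rw [interior_Icc]
      intro x hx
      exact (hasDerivAt_fbeta β (by linarith [hx.1])
        (by linarith [hx.2])).differentiableAt.differentiableWithinAt
    · rw [interior_Icc]
      intro x hx
      rw [(hasDerivAt_fbeta β (by linarith [hx.1]) (by linarith [hx.2])).deriv]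
      exact (hf1pos x hx).le
  have hanti : AntitoneOn (fbeta β) (Set.Ico qp (1 : ℝ)) := by
    apply antitoneOn_of_deriv_nonpos (convex_Ico _ _)
    · intro x hx
      exact (hasDerivAt_fbeta β (by linarith [hx.1]) hx.2).continuousAt.continuousWithinAt
    · rw [interior_Ico]
      intro x hx
      exact (hasDerivAt_fbeta β (by linarith [hx.1])
        hx.2).differentiableAt.differentiableWithinAt
    · rw [interior_Ico]
      intro x hx
      rw [(hasDerivAt_fbeta β (by linarith [hx.1]) hx.2).deriv]
      exact (hf1neg x hx).le
  -- continuity of fb2 at qp, window choice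
  have hcont : ContinuousAt (fb2 β) qp := (hasDerivAt_fb2 β hq0 hq2).continuousAt
  rw [Metric.continuousAt_iff] at hcont
  obtain ⟨δ₁, hδ₁pos, hball⟩ := hcont (μ/4) (by linarith)
  set δ₀ := min (δ₁/2) (min ((qp - 1/2)/2) (min ((1 - qp)/2) (1/4 : ℝ))) with hδ₀def
  have hδ₀pos : 0 < δ₀ :=
    lt_min (by linarith) (lt_min (by linarith) (lt_min (by linarith) (by norm_num)))
  have hδ₀le1 : δ₀ ≤ δ₁/2 := min_le_left _ _
  have hδ₀le2 : δ₀ ≤ (qp - 1/2)/2 := le_trans (min_le_right _ _) (min_le_left _ _)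
  have hδ₀le3 : δ₀ ≤ (1 - qp)/2 :=
    le_trans (min_le_right _ _) (le_trans (min_le_right _ _) (min_le_left _ _))
  have hδ₀le4 : δ₀ ≤ 1/4 :=
    le_trans (min_le_right _ _) (le_trans (min_le_right _ _) (min_le_right _ _))
  have hql : 1/2 < qp - δ₀ := by linarith
  have hqr : qp + δ₀ < 1 := by linarith
  have hwin : ∀ x : ℝ, |x - qp| ≤ δ₀ → fb2 β x < -(3*μ/4) ∧ -(5*μ/4) < fb2 β x := by
    intro x hx
    have hd : dist x qp < δ₁ := by
      rw [Real.dist_eq]; linarith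
    have := hball hd
    rw [Real.dist_eq, abs_lt] at this
    constructor <;> linarith [this.1, this.2, hfq2v]
  -- fb1 bounds on the window (right side)
  have hf1R : ∀ x : ℝ, qp < x → x ≤ qp + δ₀ →
      fb1 β x ≤ -(3*μ/4) * (x - qp) ∧ -(5*μ/4) * (x - qp) ≤ fb1 β x := by
    intro x h1 h2
    obtain ⟨ξ, hξ, he⟩ := mvt qp x h1 hq0 (by linarith)
    rw [hf1q, sub_zero, eq_div_iff (ne_of_gt (by linarith [hξ.1] : (0:ℝ) < x - qp))] at he
    have hb := hwin ξ (by rw [abs_le]; constructor <;> linarith [hξ.1, hξ.2])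
    constructor
    · have := mul_le_mul_of_nonneg_right hb.1.le (by linarith : (0:ℝ) ≤ x - qp)
      linarith
    · have := mul_le_mul_of_nonneg_right hb.2.le (by linarith : (0:ℝ) ≤ x - qp)
      linarith
  -- fb1 bounds on the window (left side)
  have hf1L : ∀ x : ℝ, qp - δ₀ ≤ x → x < qp →
      (3*μ/4) * (qp - x) ≤ fb1 β x ∧ fb1 β x ≤ (5*μ/4) * (qp - x) := by
    intro x h1 h2
    obtain ⟨ξ, hξ, he⟩ := mvt x qp h2 (by linarith) hq2
    rw [hf1q, zero_sub, eq_div_iff (ne_of_gt (by linarith [hξ.1] : (0:ℝ) < qp - x))] at he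
    have hb := hwin ξ (by rw [abs_le]; constructor <;> linarith [hξ.1, hξ.2])
    constructor
    · have := mul_le_mul_of_nonneg_right hb.1.le (by linarith : (0:ℝ) ≤ qp - x)
      linarith
    · have := mul_le_mul_of_nonneg_right hb.2.le (by linarith : (0:ℝ) ≤ qp - x)
      linarith
  -- quadratic lower bound for the drop, via monotonicity of auxiliary function
  set h : ℝ → ℝ := fun x => fbeta β qp - fbeta β x - 3*μ/8*(x - qp)^2 with hhdef
  have hder_h : ∀ x : ℝ, 0 < x → x < 1 →
      HasDerivAt h (-(fb1 β x) - 3*μ/4*(x - qp)) x := by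
    intro x h0 h1
    have d2 : HasDerivAt (fun y : ℝ => 3*μ/8*(y - qp)^2) (3*μ/4*(x - qp)) x := by
      have dl : HasDerivAt (fun y : ℝ => y - qp) 1 x := by
        simpa using (hasDerivAt_id x).sub_const qp
      have := (dl.pow 2).const_mul (3*μ/8)
      refine this.congr_deriv ?_
      ring
    have := ((hasDerivAt_const x (fbeta β qp)).sub (hasDerivAt_fbeta β h0 h1)).sub d2
    refine this.congr_deriv ?_
    ring
  have hhq : h qp = 0 := by simp [hhdef]
  have hlow : ∀ x : ℝ, |x - qp| ≤ δ₀ → 3*μ/8*(x - qp)^2 ≤ fbeta β qp - fbeta β x := by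
    intro x hx
    rw [abs_le] at hx
    have key : 0 ≤ h x := by
      rcases le_or_gt qp x with hge | hlt
      · have hm : MonotoneOn h (Set.Icc qp (qp + δ₀)) := by
          apply monotoneOn_of_deriv_nonneg (convex_Icc _ _)
          · intro y hy
            exact (hder_h y (by linarith [hy.1]) (by linarith [hy.2])).continuousAt.continuousWithinAt
          · rw [interior_Icc]
            intro y hy
            exact (hder_h y (by linarith [hy.1])
              (by linarith [hy.2])).differentiableAt.differentiableWithinAt
          · rw [interior_Icc]
            intro y hy
            rw [(hder_h y (by linarith [hy.1]) (by linarith [hy.2])).deriv]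
            have := (hf1R y hy.1 hy.2.le).1
            linarith
        have := hm ⟨le_refl qp, by linarith⟩ ⟨hge, by linarith [hx.2]⟩ hge
        linarith [hhq]
      · have hm : AntitoneOn h (Set.Icc (qp - δ₀) qp) := by
          apply antitoneOn_of_deriv_nonpos (convex_Icc _ _)
          · intro y hy
            exact (hder_h y (by linarith [hy.1]) (by linarith [hy.2])).continuousAt.continuousWithinAt
          · rw [interior_Icc]
            intro y hy
            exact (hder_h y (by linarith [hy.1])
              (by linarith [hy.2])).differentiableAt.differentiableWithinAt
          · rw [interior_Icc]
            intro y hy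
            rw [(hder_h y (by linarith [hy.1]) (by linarith [hy.2])).deriv]
            have := (hf1L y hy.1.le hy.2).1
            linarith
        have := hm ⟨by linarith [hx.1], hlt.le⟩ ⟨by linarith, le_refl qp⟩ hlt.le
        linarith [hhq]
    simp only [hhdef] at key
    linarith
  -- quadratic upper bound for the drop
  have hup : ∀ x : ℝ, |x - qp| ≤ δ₀ → fbeta β qp - fbeta β x ≤ 5*μ/4*(x - qp)^2 := by
    intro x hx
    rw [abs_le] at hx
    rcases lt_trichotomy x qp with hlt | heq | hgt
    · obtain ⟨ξ, hξ, he⟩ := mvtf x qp hlt (by linarith [hx.1]) hq2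
      rw [eq_div_iff (ne_of_gt (by linarith : (0:ℝ) < qp - x))] at he
      have hb := (hf1L ξ (by linarith [hξ.1]) hξ.2).2
      have h5 : fb1 β ξ ≤ (5*μ/4) * (qp - x) := by
        have : (5*μ/4) * (qp - ξ) ≤ (5*μ/4) * (qp - x) := by
          apply mul_le_mul_of_nonneg_left (by linarith [hξ.1]) (by linarith)
        linarith
      have := mul_le_mul_of_nonneg_right h5 (by linarith : (0:ℝ) ≤ qp - x)
      have hsq : (x - qp)^2 = (qp - x) * (qp - x) := by ring
      linarith
    · rw [heq]; simp
    · obtain ⟨ξ, hξ, he⟩ := mvtf qp x hgt hq0 (by linarith [hx.2])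
      rw [eq_div_iff (ne_of_gt (by linarith : (0:ℝ) < x - qp))] at he
      have hb := (hf1R ξ hξ.1 (by linarith [hξ.2])).2
      have h5 : -(5*μ/4) * (x - qp) ≤ fb1 β ξ := by
        have : -(5*μ/4) * (x - qp) ≤ -(5*μ/4) * (ξ - qp) := by
          rw [neg_mul, neg_mul, neg_le_neg_iff]
          apply mul_le_mul_of_nonneg_left (by linarith [hξ.2]) (by linarith)
        linarith
      have := mul_le_mul_of_nonneg_right h5 (by linarith : (0:ℝ) ≤ x - qp)
      have hsq : (x - qp)^2 = (x - qp) * (x - qp) := by ring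
      linarith
  -- conclusion
  refine ⟨μ/16, by linarith, δ₀, ⟨hδ₀pos, by linarith⟩, ?_⟩
  intro δ hδpos hδle α hα α' hα' hfar hnear
  have hαwin : |α - qp| ≤ δ₀ := le_trans hnear (by linarith)
  have h2α : (α - qp)^2 ≤ (δ/2)^2 := by
    rw [← sq_abs]
    exact pow_le_pow_left₀ (abs_nonneg _) hnear 2
  have hupα : fbeta β qp - fbeta β α ≤ 5*μ/4*((δ/2)^2) := by
    have := hup α hαwin
    nlinarith [hμpos.le]
  have key : 3*μ/8 * δ^2 ≤ fbeta β qp - fbeta β α' := by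
    rcases le_or_gt |α' - qp| δ₀ with hcase | hcase
    · have hl := hlow α' hcase
      have h2 : δ^2 ≤ (α' - qp)^2 := by
        rw [← sq_abs (α' - qp)]
        exact pow_le_pow_left₀ hδpos.le hfar 2
      nlinarith [hμpos.le]
    · have hδsq : δ^2 ≤ δ₀^2 := pow_le_pow_left₀ hδpos.le hδle 2
      rcases le_or_gt qp α' with hside | hside
      · have hgt : qp + δ₀ < α' := by
          rw [abs_of_nonneg (by linarith)] at hcase
          linarith
        have hmle : fbeta β α' ≤ fbeta β (qp + δ₀) :=
          hanti ⟨by linarith, by linarith⟩ ⟨hside, hα'.2⟩ hgt.le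
        have hl := hlow (qp + δ₀)
          (by rw [add_sub_cancel_left, abs_of_nonneg hδ₀pos.le])
        rw [add_sub_cancel_left] at hl
        nlinarith [hμpos.le]
      · have hlt : α' < qp - δ₀ := by
          rw [abs_of_neg (by linarith)] at hcase
          linarith
        have hmle : fbeta β α' ≤ fbeta β (qp - δ₀) :=
          hmono ⟨hα'.1, by linarith⟩ ⟨by linarith, by linarith⟩ hlt.le
        have hl := hlow (qp - δ₀)
          (by rw [show qp - δ₀ - qp = -δ₀ by ring, abs_neg, abs_of_nonneg hδ₀pos.le])
        rw [show qp - δ₀ - qp = -δ₀ by ring] at hl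
        nlinarith [hμpos.le]
  have hquart : (δ/2)^2 = δ^2/4 := by ring
  linarith
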